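/- The set of fixed points X(c) = {x ∈ L₀ʷ : x = S₀ʷ(R'x + c)} is a closed subset of the compact lattice L₀ʷ, and if R is sub-stochastic and x, y ∈ X(c), then the componentwise maximum max(x,y) and componentwise minimum min(x,y) satisfy: T(max(x,y)) ≥ max(x,y) and T(min(x,y)) ≤ min(x,y) where T(z) = S₀ʷ(R'z + c). -/

import Mathlib

open Matrix Finset

lemma mulVec_mono {n : ℕ} (R : Matrix (Fin n) (Fin n) ℝ) (hR : ∀ i j, 0 ≤ R i j)
    {a b : Fin n → ℝ} (h : ∀ j, a j ≤ b j) (i : Fin n) :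
    (Rᵀ.mulVec a) i ≤ (Rᵀ.mulVec b) i := by
  simp only [mulVec, dotProduct, transpose_apply]
  exact Finset.sum_le_sum fun j _ => mul_le_mul_of_nonneg_left (h j) (hR j i)

/-- The set of fixed points is closed, and for a sub-stochastic R the
componentwise max/min of two fixed points satisfy T(max) ≥ max and
T(min) ≤ min. -/
theorem stmt7 {n : ℕ} (w c : Fin n → ℝ) (hw : ∀ i, 0 ≤ w i)
    (R : Matrix (Fin n) (Fin n) ℝ) (hR : ∀ i j, 0 ≤ R i j)
    (hrow : ∀ i, ∑ j, R i j ≤ 1) :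
    IsClosed {x : Fin n → ℝ | (∀ i, 0 ≤ x i ∧ x i ≤ w i) ∧
      ∀ i, x i = max 0 (min ((Rᵀ.mulVec x) i + c i) (w i))} ∧
    ∀ x y : Fin n → ℝ,
      ((∀ i, 0 ≤ x i ∧ x i ≤ w i) ∧
        ∀ i, x i = max 0 (min ((Rᵀ.mulVec x) i + c i) (w i))) →
      ((∀ i, 0 ≤ y i ∧ y i ≤ w i) ∧
        ∀ i, y i = max 0 (min ((Rᵀ.mulVec y) i + c i) (w i))) →
      (∀ i, max (x i) (y i) ≤
        max 0 (min ((Rᵀ.mulVec (fun j => max (x j) (y j))) i + c i) (w i))) ∧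
      (∀ i, max 0 (min ((Rᵀ.mulVec (fun j => min (x j) (y j))) i + c i) (w i)) ≤
        min (x i) (y i)) := by
  constructor
  · have : {x : Fin n → ℝ | (∀ i, 0 ≤ x i ∧ x i ≤ w i) ∧
        ∀ i, x i = max 0 (min ((Rᵀ.mulVec x) i + c i) (w i))} =
        (⋂ i, {x : Fin n → ℝ | 0 ≤ x i ∧ x i ≤ w i}) ∩
        (⋂ i, {x : Fin n → ℝ | x i = max 0 (min ((Rᵀ.mulVec x) i + c i) (w i))}) := by
      ext x
      simp [Set.mem_iInter, Set.mem_setOf_eq]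
    rw [this]
    have hcont : ∀ i, Continuous fun x : Fin n → ℝ => (Rᵀ.mulVec x) i := by
      intro i
      simp only [mulVec, dotProduct]
      exact continuous_finset_sum _ fun j _ =>
        (continuous_const.mul (continuous_apply j))
    apply IsClosed.inter
    · apply isClosed_iInter
      intro i
      exact IsClosed.inter (isClosed_le continuous_const (continuous_apply i))
        (isClosed_le (continuous_apply i) continuous_const)
    · apply isClosed_iInter
      intro i
      exact isClosed_eq (continuous_apply i)
        (continuous_const.max (((hcont i).add continuous_const).min continuous_const))
  · rintro x y ⟨hx1, hx2⟩ ⟨hy1, hy2⟩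
    constructor
    · intro i
      apply max_le
      · calc x i = max 0 (min ((Rᵀ.mulVec x) i + c i) (w i)) := hx2 i
          _ ≤ _ := max_le_max le_rfl (min_le_min (add_le_add_left
              (mulVec_mono R hR (fun j => le_max_left _ _) i) _) le_rfl)
      · calc y i = max 0 (min ((Rᵀ.mulVec y) i + c i) (w i)) := hy2 i
          _ ≤ _ := max_le_max le_rfl (min_le_min (add_le_add_left
              (mulVec_mono R hR (fun j => le_max_right _ _) i) _) le_rfl)
    · intro i
      apply le_min
      · calc max 0 (min ((Rᵀ.mulVec (fun j => min (x j) (y j))) i + c i) (w i))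
            ≤ max 0 (min ((Rᵀ.mulVec x) i + c i) (w i)) :=
              max_le_max le_rfl (min_le_min (add_le_add_left
                (mulVec_mono R hR (fun j => min_le_left _ _) i) _) le_rfl)
          _ = x i := (hx2 i).symm
      · calc max 0 (min ((Rᵀ.mulVec (fun j => min (x j) (y j))) i + c i) (w i))
            ≤ max 0 (min ((Rᵀ.mulVec y) i + c i) (w i)) :=
              max_le_max le_rfl (min_le_min (add_le_add_left
                (mulVec_mono R hR (fun j => min_le_right _ _) i) _) le_rfl)
          _ = y i := (hy2 i).symm
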